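/- Let Γ and Γ' be (ℵ₀, κ) saS graphs with left side ω, with partitions R = ⋃_{i<κ} R_i and R' = ⋃_{i<κ} R'_i of their right sides into countable pieces such that each induced subgraph ⟨ω, R_i⟩ and ⟨ω, R'_i⟩ is random. Then the partial order P of finite partial isomorphisms p from Γ to Γ' satisfying p(x) ∈ R'_i for all x ∈ dom(p) ∩ R_i, ordered by inclusion, satisfies the countable chain condition. -/

import Mathlib

structure BipGraph (V : Type*) where
  L : Set V
  R : Set V
  Lne : L.Nonempty
  Rne : R.Nonempty
  disj : Disjoint L R
  E : V → V → Prop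
  symm : ∀ x y, E x y → E y x
  bip : ∀ x y, E x y → (x ∈ L ∧ y ∈ R) ∨ (x ∈ R ∧ y ∈ L)

namespace BipGraph

variable {V W : Type*}

def verts (Γ : BipGraph V) : Set V := Γ.L ∪ Γ.R

def nbr (Γ : BipGraph V) (v : V) : Set V := {u | Γ.E v u}

def IsComplete (Γ : BipGraph V) : Prop := ∀ x ∈ Γ.L, ∀ y ∈ Γ.R, Γ.E x y

def IsEmptyG (Γ : BipGraph V) : Prop := ∀ x y, ¬ Γ.E x y

def IsPartialIso (Γ : BipGraph V) (Γ' : BipGraph W) (s : Set V) (f : V → W) : Prop :=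
  s ⊆ Γ.verts ∧ Set.InjOn f s ∧
  (∀ x ∈ s, x ∈ Γ.L → f x ∈ Γ'.L) ∧
  (∀ x ∈ s, x ∈ Γ.R → f x ∈ Γ'.R) ∧
  (∀ x ∈ s, ∀ y ∈ s, (Γ.E x y ↔ Γ'.E (f x) (f y)))

def IsIso (Γ : BipGraph V) (Γ' : BipGraph W) (f : V → W) : Prop :=
  Set.BijOn f Γ.verts Γ'.verts ∧
  Set.MapsTo f Γ.L Γ'.L ∧ Set.MapsTo f Γ.R Γ'.R ∧
  (∀ x ∈ Γ.verts, ∀ y ∈ Γ.verts, (Γ.E x y ↔ Γ'.E (f x) (f y)))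

def IsAuto (Γ : BipGraph V) (f : V → V) : Prop := Γ.IsIso Γ f

def Homog (Γ : BipGraph V) : Prop :=
  ∀ (s : Set V) (f : V → V), s.Finite → Γ.IsPartialIso Γ s f →
    ∃ g : V → V, Γ.IsAuto g ∧ Set.EqOn f g s

def IsRandom (Γ : BipGraph V) : Prop :=
  Γ.L.Infinite ∧ Γ.R.Infinite ∧
  (∀ X Y : Set V, X ⊆ Γ.L → Y ⊆ Γ.L → X.Finite → Y.Finite → Disjoint X Y →
    {u ∈ Γ.R | (∀ x ∈ X, Γ.E x u) ∧ (∀ y ∈ Y, ¬ Γ.E y u)}.Infinite) ∧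
  (∀ X Y : Set V, X ⊆ Γ.R → Y ⊆ Γ.R → X.Finite → Y.Finite → Disjoint X Y →
    {u ∈ Γ.L | (∀ x ∈ X, Γ.E x u) ∧ (∀ y ∈ Y, ¬ Γ.E y u)}.Infinite)

def Ctble (Γ : BipGraph V) : Prop := Γ.L.Countable ∧ Γ.R.Countable

def IsSaS (Γ : BipGraph V) (κ μ : Cardinal) : Prop :=
  Γ.Homog ∧ ¬ Γ.IsComplete ∧ ¬ Γ.IsEmptyG ∧
  Cardinal.mk Γ.L = κ ∧ Cardinal.mk Γ.R = μ ∧ κ < μ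

end BipGraph

namespace BipGraph

/-- The induced subgraph `⟨L, S⟩` of `Γ` (for `S ⊆ Γ.R`) is a random bipartite
graph. -/
def RandOn {V : Type*} (Γ : BipGraph V) (S : Set V) : Prop :=
  (∀ X Y : Finset V, ↑X ⊆ Γ.L → ↑Y ⊆ Γ.L → Disjoint X Y →
    {a ∈ S | (∀ x ∈ X, Γ.E x a) ∧ (∀ y ∈ Y, ¬ Γ.E y a)}.Infinite) ∧
  (∀ X Y : Finset V, ↑X ⊆ S → ↑Y ⊆ S → Disjoint X Y →
    {x ∈ Γ.L | (∀ a ∈ X, Γ.E a x) ∧ (∀ b ∈ Y, ¬ Γ.E b x)}.Infinite)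

end BipGraph

/-- A condition in the forcing `P_{Γ,Γ'}`: a finite partial isomorphism from
`Γ` to `Γ'` respecting the partitions of the right sides given by the indexing
functions `idx`, `idx'`. -/
def PCond {V W I : Type*} (Γ : BipGraph V) (Γ' : BipGraph W)
    (idx : V → I) (idx' : W → I) (p : Finset V × (V → W)) : Prop :=
  Γ.IsPartialIso Γ' ↑p.1 p.2 ∧ ∀ a ∈ p.1, a ∈ Γ.R → idx' (p.2 a) = idx a

/-- The extension order on conditions. -/
def PLe {V W : Type*} (p q : Finset V × (V → W)) : Prop :=
  p.1 ⊆ q.1 ∧ ∀ x ∈ p.1, q.2 x = p.2 x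


section DeltaHelpers
open Set

/-- Fiber lemma: an uncountable set mapped into a countable set has an uncountable fiber. -/
lemma uncountable_fiber {α β : Type*} {A : Set α} (hA : ¬ A.Countable) (f : α → β)
    {D : Set β} (hD : D.Countable) (hf : ∀ p ∈ A, f p ∈ D) :
    ∃ d, ¬ {p ∈ A | f p = d}.Countable := by
  by_contra h
  push_neg at h
  apply hA
  have : A ⊆ ⋃ d ∈ D, {p ∈ A | f p = d} := by
    intro p hp
    exact mem_biUnion (hf p hp) ⟨hp, rfl⟩
  exact (hD.biUnion (fun d _ => h d)).mono this

/-- Δ-system lemma (bounded-size case). -/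
lemma delta_system_aux {α X : Type*} [DecidableEq X] :
    ∀ (n : ℕ) (F : α → Finset X) (B : Set α), ¬ B.Countable →
      (∀ p ∈ B, (F p).card ≤ n) →
      ∃ C, C ⊆ B ∧ ¬ C.Countable ∧
        ∃ r : Finset X, ∀ p ∈ C, ∀ q ∈ C, p ≠ q → F p ∩ F q = r := by
  intro n
  induction n with
  | zero =>
    intro F B hB hcard
    refine ⟨B, Subset.rfl, hB, ∅, fun p hp q hq _ => ?_⟩
    have : F p = ∅ := Finset.card_eq_zero.mp (Nat.le_zero.mp (hcard p hp))
    simp [this]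
  | succ n ih =>
    intro F B hB hcard
    by_cases hx : ∃ x, ¬ {p ∈ B | x ∈ F p}.Countable
    · obtain ⟨x, hx⟩ := hx
      have hcard' : ∀ p ∈ {p ∈ B | x ∈ F p}, ((F p).erase x).card ≤ n := by
        intro p hp
        have := hcard p hp.1
        have := Finset.card_erase_of_mem hp.2
        omega
      obtain ⟨C, hCB, hC, r, hr⟩ := ih (fun p => (F p).erase x) {p ∈ B | x ∈ F p} hx hcard'
      refine ⟨C, fun p hp => (hCB hp).1, hC, insert x r, fun p hp q hq hpq => ?_⟩
      have hxp : x ∈ F p := (hCB hp).2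
      have hxq : x ∈ F q := (hCB hq).2
      have := hr p hp q hq hpq
      ext y
      constructor
      · intro hy
        simp only [Finset.mem_inter] at hy
        rcases eq_or_ne y x with h | h
        · simp [h]
        · have : y ∈ (F p).erase x ∩ (F q).erase x := by
            simp [Finset.mem_erase, h, hy.1, hy.2]
          rw [hr p hp q hq hpq] at this
          simp [this]
      · intro hy
        rcases Finset.mem_insert.mp hy with h | h
        · subst h; simp [hxp, hxq]
        · rw [← hr p hp q hq hpq] at h
          simp only [Finset.mem_inter, Finset.mem_erase] at h
          simp [h.1.2, h.2.2]
    · push_neg at hx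
      -- Zorn: a maximal pairwise-disjoint subfamily
      have hchainok : ∀ c ⊆ {M : Set α | M ⊆ B ∧ ∀ p ∈ M, ∀ q ∈ M, p ≠ q → F p ∩ F q = ∅},
          IsChain (· ⊆ ·) c → ∃ ub ∈ {M : Set α | M ⊆ B ∧ ∀ p ∈ M, ∀ q ∈ M, p ≠ q → F p ∩ F q = ∅},
            ∀ s ∈ c, s ⊆ ub := by
        intro c hcS hchain
        refine ⟨⋃₀ c, ⟨?_, ?_⟩, fun s hs => subset_sUnion_of_mem hs⟩
        · exact sUnion_subset (fun s hs => (hcS hs).1)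
        · rintro p hp q hq hpq
          obtain ⟨s, hs, hps⟩ := hp
          obtain ⟨t, ht, hqt⟩ := hq
          rcases hchain.total hs ht with h | h
          · exact (hcS ht).2 p (h hps) q hqt hpq
          · exact (hcS hs).2 p hps q (h hqt) hpq
      obtain ⟨M, hM⟩ := zorn_subset
          {M : Set α | M ⊆ B ∧ ∀ p ∈ M, ∀ q ∈ M, p ≠ q → F p ∩ F q = ∅} hchainok
      have hMB := hM.prop.1
      have hMd := hM.prop.2
      refine ⟨M, hMB, ?_, ∅, hMd⟩
      intro hMc
      apply hB
      have hX0 : (⋃ p ∈ M, (↑(F p) : Set X)).Countable :=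
        hMc.biUnion (fun p _ => (F p).countable_toSet)
      have hcover : B ⊆ M ∪ ⋃ x ∈ ⋃ p ∈ M, (↑(F p) : Set X), {p ∈ B | x ∈ F p} := by
        intro p hp
        by_cases hpM : p ∈ M
        · exact Or.inl hpM
        · right
          have hnot : ¬ (insert p M ∈
              {M : Set α | M ⊆ B ∧ ∀ p ∈ M, ∀ q ∈ M, p ≠ q → F p ∩ F q = ∅}) := by
            intro hmem
            exact hpM (hM.eq_of_subset hmem (subset_insert p M) ▸ mem_insert p M)
          have : ¬ ∀ a ∈ insert p M, ∀ b ∈ insert p M, a ≠ b → F a ∩ F b = ∅ := by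
            intro hpair
            exact hnot ⟨insert_subset hp hMB, hpair⟩
          push_neg at this
          obtain ⟨a, ha, b, hb, hab, hFab⟩ := this
          obtain ⟨x, hxa⟩ := id hFab
          simp only [Finset.mem_inter] at hxa
          rcases mem_insert_iff.mp ha with rfl | haM
          · have hbM : b ∈ M := by
              rcases mem_insert_iff.mp hb with rfl | h
              · exact absurd rfl hab
              · exact h
            exact mem_biUnion (mem_biUnion hbM hxa.2) ⟨hp, hxa.1⟩
          · rcases mem_insert_iff.mp hb with rfl | hbM
            · exact mem_biUnion (mem_biUnion haM hxa.1) ⟨hp, hxa.2⟩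
            · exact absurd (hMd a haM b hbM hab) (Finset.nonempty_iff_ne_empty.mp hFab)
      exact ((hMc.union (hX0.biUnion (fun x _ => hx x))).mono hcover)

/-- Δ-system lemma. -/
lemma delta_system {α X : Type*} [DecidableEq X] (F : α → Finset X) (A : Set α) (hA : ¬ A.Countable) :
    ∃ C, C ⊆ A ∧ ¬ C.Countable ∧
      ∃ r : Finset X, ∀ p ∈ C, ∀ q ∈ C, p ≠ q → F p ∩ F q = r := by
  obtain ⟨n, hn⟩ := uncountable_fiber hA (fun p => (F p).card) countable_univ
    (fun _ _ => mem_univ _)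
  obtain ⟨C, hCA, hC, r, hr⟩ := delta_system_aux n F {p ∈ A | (F p).card = n} hn
    (fun p hp => le_of_eq hp.2)
  exact ⟨C, fun p hp => (hCA hp).1, hC, r, hr⟩

/-- An uncountable set has two distinct elements. -/
lemma uncountable_two {α : Type*} {A : Set α} (hA : ¬ A.Countable) :
    ∃ p ∈ A, ∃ q ∈ A, p ≠ q := by
  by_contra h
  push_neg at h
  apply hA
  rcases A.eq_empty_or_nonempty with rfl | ⟨p, hp⟩
  · exact countable_empty
  · exact (countable_singleton p).mono (fun q hq => mem_singleton_iff.mpr (h q hq p hp))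


end DeltaHelpers

/-- Encoding of a condition's domain and image as one finset. -/
private noncomputable def Sfin {V W : Type*} (p : Finset V × (V → W)) : Finset (V ⊕ W) := by
  classical exact p.1.image Sum.inl ∪ (p.1.image p.2).image Sum.inr

private lemma mem_Sfin_inl {V W : Type*} (p : Finset V × (V → W)) (a : V) :
    Sum.inl a ∈ Sfin p ↔ a ∈ p.1 := by
  classical simp [Sfin]

private lemma mem_Sfin_inr {V W : Type*} (p : Finset V × (V → W)) (w : W) :
    Sum.inr w ∈ Sfin p ↔ ∃ a ∈ p.1, p.2 a = w := by
  classical simp [Sfin]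

/-- The countable "trace" data of a condition relative to a root `ρ`. -/
private noncomputable def DataF {V W : Type*} (LS : Set V) (ρ : Finset (V ⊕ W))
    (p : Finset V × (V → W)) : Finset (V × W) := by
  classical
  exact
    (p.1.filter (fun a => a ∈ LS ∨ Sum.inl a ∈ ρ ∨ Sum.inr (p.2 a) ∈ ρ)).image
      (fun a => (a, p.2 a))

private lemma mem_DataF {V W : Type*} (LS : Set V) (ρ : Finset (V ⊕ W))
    (p : Finset V × (V → W)) (z : V × W) :
    z ∈ DataF LS ρ p ↔
      ∃ a, (a ∈ p.1 ∧ (a ∈ LS ∨ Sum.inl a ∈ ρ ∨ Sum.inr (p.2 a) ∈ ρ)) ∧ (a, p.2 a) = z := by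
  classical simp [DataF]

universe u

theorem forcing_is_ccc {V W I : Type u} (κ : Cardinal)
    (hκ : Cardinal.aleph0 < κ) (hI : Cardinal.mk I = κ)
    (Γ : BipGraph V) (Γ' : BipGraph W)
    (hΓ : Γ.IsSaS Cardinal.aleph0 κ) (hΓ' : Γ'.IsSaS Cardinal.aleph0 κ)
    (idx : V → I) (idx' : W → I)
    (hpiece : ∀ i : I, {a | a ∈ Γ.R ∧ idx a = i}.Countable ∧
      Γ.RandOn {a | a ∈ Γ.R ∧ idx a = i})
    (hpiece' : ∀ i : I, {a | a ∈ Γ'.R ∧ idx' a = i}.Countable ∧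
      Γ'.RandOn {a | a ∈ Γ'.R ∧ idx' a = i}) :
    ∀ A : Set (Finset V × (V → W)),
      (∀ p ∈ A, PCond Γ Γ' idx idx' p) →
      (∀ p ∈ A, ∀ q ∈ A, p ≠ q →
        ¬ ∃ r, PCond Γ Γ' idx idx' r ∧ PLe p r ∧ PLe q r) →
      A.Countable := by
  classical
  intro A hPC hAnti
  by_contra hA
  -- countability of the left sides
  have hLc : Γ.L.Countable :=
    Set.countable_coe_iff.mp (Cardinal.mk_le_aleph0_iff.mp (le_of_eq hΓ.2.2.2.1))
  have hL'c : Γ'.L.Countable :=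
    Set.countable_coe_iff.mp (Cardinal.mk_le_aleph0_iff.mp (le_of_eq hΓ'.2.2.2.1))
  -- Δ-system
  obtain ⟨B, hBA, hB, ρ, hρ⟩ := delta_system (Sfin (V := V) (W := W)) A hA
  have hρV : {a : V | Sum.inl a ∈ ρ}.Finite :=
    Set.Finite.preimage (Sum.inl_injective.injOn) ρ.finite_toSet
  have hρW : {w : W | Sum.inr w ∈ ρ}.Finite :=
    Set.Finite.preimage (Sum.inr_injective.injOn) ρ.finite_toSet
  -- the countable target set for the trace data
  set T : Set (V × W) :=
    (Γ.L ×ˢ Γ'.L) ∪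
      ((⋃ a ∈ {a : V | Sum.inl a ∈ ρ}, {a} ×ˢ {w | w ∈ Γ'.R ∧ idx' w = idx a}) ∪
        ⋃ w ∈ {w : W | Sum.inr w ∈ ρ}, {b | b ∈ Γ.R ∧ idx b = idx' w} ×ˢ {w}) with hT
  have hTc : T.Countable := by
    refine (hLc.prod hL'c).union (Set.Countable.union ?_ ?_)
    · exact hρV.countable.biUnion fun a _ =>
        (Set.countable_singleton a).prod (hpiece' (idx a)).1
    · exact hρW.countable.biUnion fun w _ =>
        (hpiece (idx' w)).1.prod (Set.countable_singleton w)
  -- the trace of every condition in A lies in T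
  have hDataT : ∀ p ∈ A, ↑(DataF Γ.L ρ p) ⊆ T := by
    intro p hp z hz
    rw [Finset.mem_coe, mem_DataF] at hz
    obtain ⟨a, ⟨ha1, hcond⟩, rfl⟩ := hz
    obtain ⟨⟨hsub, hinj, hLm, hRm, hE⟩, hidx⟩ := hPC p hp
    have hav : a ∈ Γ.L ∪ Γ.R := hsub (Finset.mem_coe.mpr ha1)
    rcases hav with haL | haR
    · exact Or.inl ⟨haL, hLm a (Finset.mem_coe.mpr ha1) haL⟩
    · have hw' : p.2 a ∈ Γ'.R := hRm a (Finset.mem_coe.mpr ha1) haR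
      have hiw : idx' (p.2 a) = idx a := hidx a ha1 haR
      rcases hcond with haL | haρ | hwρ
      · exact absurd haR (Set.disjoint_left.mp Γ.disj haL)
      · refine Or.inr (Or.inl (Set.mem_biUnion haρ ?_))
        exact ⟨rfl, hw', hiw⟩
      · refine Or.inr (Or.inr (Set.mem_biUnion hwρ ?_))
        exact ⟨⟨haR, hiw.symm⟩, rfl⟩
  -- countably many possible traces
  have hDc : {s : Finset (V × W) | ↑s ⊆ T}.Countable := by
    have hsub : {s : Finset (V × W) | ↑s ⊆ T} ⊆
        (fun s : Finset (V × W) => (↑s : Set (V × W))) ⁻¹' {t | t.Finite ∧ t ⊆ T} :=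
      fun s hs => ⟨s.finite_toSet, hs⟩
    exact ((Set.countable_setOf_finite_subset hTc).preimage Finset.coe_injective).mono hsub
  obtain ⟨d, hd⟩ := uncountable_fiber hB (DataF Γ.L ρ) hDc (fun p hp => hDataT p (hBA hp))
  obtain ⟨p, hp, q, hq, hpq⟩ := uncountable_two hd
  have hpB : p ∈ B := hp.1
  have hqB : q ∈ B := hq.1
  have hpA : p ∈ A := hBA hpB
  have hqA : q ∈ A := hBA hqB
  have hdpq : DataF Γ.L ρ p = DataF Γ.L ρ q := hp.2.trans hq.2.symm
  have hroot : Sfin p ∩ Sfin q = ρ := hρ p hpB q hqB hpq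
  -- transfer of trace information between p and q
  have key : ∀ u v : Finset V × (V → W), DataF Γ.L ρ u = DataF Γ.L ρ v →
      ∀ a ∈ u.1, (a ∈ Γ.L ∨ Sum.inl a ∈ ρ ∨ Sum.inr (u.2 a) ∈ ρ) →
        a ∈ v.1 ∧ v.2 a = u.2 a := by
    intro u v huv a ha hcond
    have hmem : (a, u.2 a) ∈ DataF Γ.L ρ u :=
      (mem_DataF _ _ _ _).mpr ⟨a, ⟨ha, hcond⟩, rfl⟩
    rw [huv, mem_DataF] at hmem
    obtain ⟨b, ⟨hb1, -⟩, heq⟩ := hmem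
    obtain ⟨h1, h2⟩ := Prod.mk.injEq .. ▸ heq
    exact ⟨h1 ▸ hb1, h1 ▸ h2⟩
  -- intersections of domains/images lie in the root
  have hcap : ∀ a, a ∈ p.1 → a ∈ q.1 → Sum.inl a ∈ ρ := by
    intro a h1 h2
    rw [← hroot]
    exact Finset.mem_inter.mpr ⟨(mem_Sfin_inl p a).mpr h1, (mem_Sfin_inl q a).mpr h2⟩
  have himg : ∀ w : W, (∃ a ∈ p.1, p.2 a = w) → (∃ a ∈ q.1, q.2 a = w) → Sum.inr w ∈ ρ := by
    intro w h1 h2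
    rw [← hroot]
    exact Finset.mem_inter.mpr ⟨(mem_Sfin_inr p w).mpr h1, (mem_Sfin_inr q w).mpr h2⟩
  obtain ⟨⟨hsubp, hinjp, hLp, hRp, hEp⟩, hidxp⟩ := hPC p hpA
  obtain ⟨⟨hsubq, hinjq, hLq, hRq, hEq⟩, hidxq⟩ := hPC q hqA
  -- the amalgamated condition
  set r : Finset V × (V → W) :=
    (p.1 ∪ q.1, fun x => if x ∈ p.1 then p.2 x else q.2 x) with hr
  have hhp : ∀ x ∈ p.1, r.2 x = p.2 x := fun x hx => if_pos hx
  have hhq : ∀ x ∈ q.1, r.2 x = q.2 x := by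
    intro x hx
    by_cases hxp : x ∈ p.1
    · have hxρ : Sum.inl x ∈ ρ := hcap x hxp hx
      have := key q p hdpq.symm x hx (Or.inr (Or.inl hxρ))
      simpa [r, if_pos hxp] using this.2
    · exact if_neg hxp
  have hmemr : ∀ x, x ∈ r.1 → x ∈ p.1 ∨ x ∈ q.1 := by
    intro x hx
    simpa [r] using Finset.mem_union.mp hx
  -- vertices in only one domain are right-side vertices
  have honlyR : ∀ x, x ∈ p.1 → x ∉ q.1 → x ∈ Γ.R := by
    intro x hx hxq
    rcases hsubp (Finset.mem_coe.mpr hx) with hL | hR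
    · exact absurd (key p q hdpq x hx (Or.inl hL)).1 hxq
    · exact hR
  have honlyR' : ∀ x, x ∈ q.1 → x ∉ p.1 → x ∈ Γ.R := by
    intro x hx hxp
    rcases hsubq (Finset.mem_coe.mpr hx) with hL | hR
    · exact absurd (key q p hdpq.symm x hx (Or.inl hL)).1 hxp
    · exact hR
  refine hAnti p hpA q hqA hpq ⟨r, ⟨⟨?_, ?_, ?_, ?_, ?_⟩, ?_⟩,
    ⟨by simp [r], hhp⟩, ⟨by simp [r], hhq⟩⟩
  · -- domain in vertices
    intro x hx
    rcases hmemr x (Finset.mem_coe.mp hx) with h | h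
    · exact hsubp (Finset.mem_coe.mpr h)
    · exact hsubq (Finset.mem_coe.mpr h)
  · -- injectivity
    intro x hx y hy hxy
    rcases hmemr x (Finset.mem_coe.mp hx) with hxP | hxQ <;>
      rcases hmemr y (Finset.mem_coe.mp hy) with hyP | hyQ
    · rw [hhp x hxP, hhp y hyP] at hxy
      exact hinjp (Finset.mem_coe.mpr hxP) (Finset.mem_coe.mpr hyP) hxy
    · by_cases hyp : y ∈ p.1
      · rw [hhp x hxP, hhp y hyp] at hxy
        exact hinjp (Finset.mem_coe.mpr hxP) (Finset.mem_coe.mpr hyp) hxy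
      · exfalso
        rw [hhp x hxP, hhq y hyQ] at hxy
        have hw : Sum.inr (q.2 y) ∈ ρ :=
          himg (q.2 y) ⟨x, hxP, hxy⟩ ⟨y, hyQ, rfl⟩
        exact hyp (key q p hdpq.symm y hyQ (Or.inr (Or.inr hw))).1
    · by_cases hxp : x ∈ p.1
      · rw [hhp x hxp, hhp y hyP] at hxy
        exact hinjp (Finset.mem_coe.mpr hxp) (Finset.mem_coe.mpr hyP) hxy
      · exfalso
        rw [hhq x hxQ, hhp y hyP] at hxy
        have hw : Sum.inr (q.2 x) ∈ ρ :=
          himg (q.2 x) ⟨y, hyP, hxy.symm⟩ ⟨x, hxQ, rfl⟩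
        exact hxp (key q p hdpq.symm x hxQ (Or.inr (Or.inr hw))).1
    · rw [hhq x hxQ, hhq y hyQ] at hxy
      exact hinjq (Finset.mem_coe.mpr hxQ) (Finset.mem_coe.mpr hyQ) hxy
  · -- maps L to L
    intro x hx hxL
    rcases hmemr x (Finset.mem_coe.mp hx) with h | h
    · rw [hhp x h]; exact hLp x (Finset.mem_coe.mpr h) hxL
    · rw [hhq x h]; exact hLq x (Finset.mem_coe.mpr h) hxL
  · -- maps R to R
    intro x hx hxR
    rcases hmemr x (Finset.mem_coe.mp hx) with h | h
    · rw [hhp x h]; exact hRp x (Finset.mem_coe.mpr h) hxR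
    · rw [hhq x h]; exact hRq x (Finset.mem_coe.mpr h) hxR
  · -- edge condition
    intro x hx y hy
    by_cases hxp : x ∈ p.1 <;> by_cases hyp : y ∈ p.1
    · rw [hhp x hxp, hhp y hyp]
      exact hEp x (Finset.mem_coe.mpr hxp) y (Finset.mem_coe.mpr hyp)
    · have hyQ : y ∈ q.1 := (hmemr y (Finset.mem_coe.mp hy)).resolve_left hyp
      by_cases hxq : x ∈ q.1
      · rw [hhq x hxq, hhq y hyQ]
        exact hEq x (Finset.mem_coe.mpr hxq) y (Finset.mem_coe.mpr hyQ)
      · -- cross case: both are right-side vertices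
        have hxR : x ∈ Γ.R := honlyR x hxp hxq
        have hyR : y ∈ Γ.R := honlyR' y hyQ hyp
        have h1 : ¬ Γ.E x y := by
          intro h
          rcases Γ.bip x y h with ⟨hL, _⟩ | ⟨_, hL⟩
          · exact (Set.disjoint_left.mp Γ.disj hL) hxR
          · exact (Set.disjoint_left.mp Γ.disj hL) hyR
        have h2 : ¬ Γ'.E (r.2 x) (r.2 y) := by
          intro h
          have hx' : r.2 x ∈ Γ'.R := by
            rw [hhp x hxp]; exact hRp x (Finset.mem_coe.mpr hxp) hxR
          have hy' : r.2 y ∈ Γ'.R := by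
            rw [hhq y hyQ]; exact hRq y (Finset.mem_coe.mpr hyQ) hyR
          rcases Γ'.bip _ _ h with ⟨hL, _⟩ | ⟨_, hL⟩
          · exact (Set.disjoint_left.mp Γ'.disj hL) hx'
          · exact (Set.disjoint_left.mp Γ'.disj hL) hy'
        exact iff_of_false h1 h2
    · have hxQ : x ∈ q.1 := (hmemr x (Finset.mem_coe.mp hx)).resolve_left hxp
      by_cases hyq : y ∈ q.1
      · rw [hhq x hxQ, hhq y hyq]
        exact hEq x (Finset.mem_coe.mpr hxQ) y (Finset.mem_coe.mpr hyq)
      · have hxR : x ∈ Γ.R := honlyR' x hxQ hxp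
        have hyR : y ∈ Γ.R := honlyR y hyp hyq
        have h1 : ¬ Γ.E x y := by
          intro h
          rcases Γ.bip x y h with ⟨hL, _⟩ | ⟨_, hL⟩
          · exact (Set.disjoint_left.mp Γ.disj hL) hxR
          · exact (Set.disjoint_left.mp Γ.disj hL) hyR
        have h2 : ¬ Γ'.E (r.2 x) (r.2 y) := by
          intro h
          have hx' : r.2 x ∈ Γ'.R := by
            rw [hhq x hxQ]; exact hRq x (Finset.mem_coe.mpr hxQ) hxR
          have hy' : r.2 y ∈ Γ'.R := by
            rw [hhp y hyp]; exact hRp y (Finset.mem_coe.mpr hyp) hyR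
          rcases Γ'.bip _ _ h with ⟨hL, _⟩ | ⟨_, hL⟩
          · exact (Set.disjoint_left.mp Γ'.disj hL) hx'
          · exact (Set.disjoint_left.mp Γ'.disj hL) hy'
        exact iff_of_false h1 h2
    · have hxQ : x ∈ q.1 := (hmemr x (Finset.mem_coe.mp hx)).resolve_left hxp
      have hyQ : y ∈ q.1 := (hmemr y (Finset.mem_coe.mp hy)).resolve_left hyp
      rw [hhq x hxQ, hhq y hyQ]
      exact hEq x (Finset.mem_coe.mpr hxQ) y (Finset.mem_coe.mpr hyQ)
  · -- index condition
    intro a ha haR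
    rcases hmemr a ha with h | h
    · rw [hhp a h]; exact hidxp a h haR
    · rw [hhq a h]; exact hidxq a h haR
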